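/- Let p be an odd prime and suppose n divides p^t + 1 for some positive integer t with (p^t+1)/n an odd integer. Let x denote the image of X in R = F_p[X]/(X^n+1). Then x^{p^t+1} = −1 in R, so that x is a unit with x⁻¹ = −x^{p^t}; consequently, for every polynomial f ∈ F_p[X], evaluating at x gives f(x⁻¹) = (f(−x))^{p^t} in R. -/

import Mathlib

open Polynomial

/-- The cyclotomic ring `R = F_p[X]/(X^n + 1)`. -/
abbrev Rpn (p n : ℕ) := Polynomial (ZMod p) ⧸ Ideal.span {(X : Polynomial (ZMod p)) ^ n + 1}

/-- The quotient map `F_p[X] → R`. -/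
noncomputable def mkR (p n : ℕ) : Polynomial (ZMod p) →+* Rpn p n :=
  Ideal.Quotient.mk (Ideal.span {(X : Polynomial (ZMod p)) ^ n + 1})

/-- if `n ∣ p^t + 1` with `(p^t+1)/n` odd, then in `R = F_p[X]/(X^n+1)`
the image `x` of `X` satisfies `x^{p^t+1} = −1`, `x` is a unit with `x⁻¹ = −x^{p^t}`,
and `f(x⁻¹) = (f(−x))^{p^t}` for every polynomial `f ∈ F_p[X]`. -/
theorem stmt7 (p n t : ℕ) [Fact p.Prime] (hp : Odd p) (ht : 0 < t) (hn : 0 < n)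
    (hdvd : n ∣ p ^ t + 1) (hq : Odd ((p ^ t + 1) / n)) :
    (mkR p n X) ^ (p ^ t + 1) = -1 ∧
    mkR p n X * (-(mkR p n X) ^ (p ^ t)) = 1 ∧
    (∀ f : Polynomial (ZMod p),
      aeval (-(mkR p n X) ^ (p ^ t)) f = (aeval (-(mkR p n X)) f) ^ (p ^ t)) := by
  have hpp := (Fact.out : p.Prime)
  set x : Rpn p n := mkR p n X with hx
  have hxn : x ^ n = -1 := by
    have h0 : mkR p n ((X : Polynomial (ZMod p)) ^ n + 1) = 0 :=
      Ideal.Quotient.eq_zero_iff_mem.mpr (Ideal.subset_span rfl)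
    rw [map_add, map_pow, map_one] at h0
    exact eq_neg_of_add_eq_zero_left h0
  obtain ⟨q, hqn⟩ := hdvd
  have hqodd : Odd q := by rwa [hqn, Nat.mul_div_cancel_left _ hn] at hq
  have h1 : x ^ (p ^ t + 1) = -1 := by
    rw [hqn, pow_mul, hxn]
    exact Odd.neg_one_pow (α := Rpn p n) hqodd
  have hptodd : Odd (p ^ t) := hp.pow
  have h2 : x * (-x ^ (p ^ t)) = 1 := by
    have hh : x * -x ^ (p ^ t) = -(x ^ (p ^ t + 1)) := by
      rw [pow_succ]; ring
    rw [hh, h1, neg_neg]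
  refine ⟨h1, h2, fun f => ?_⟩
  -- characteristic p
  have hnt : Nontrivial (Rpn p n) := by
    apply Ideal.Quotient.nontrivial_iff.mpr
    rw [Ne, Ideal.span_singleton_eq_top]
    intro hu
    have := Polynomial.degree_eq_zero_of_isUnit hu
    have hd : ((X : Polynomial (ZMod p)) ^ n + 1).degree = n := by
      rw [Polynomial.degree_add_eq_left_of_degree_lt]
      · simp
      · simp [Polynomial.degree_X_pow]
        exact_mod_cast hn
    rw [hd] at this
    exact_mod_cast hn.ne' (by exact_mod_cast this)
  haveI hchar : CharP (Rpn p n) p := charP_of_injective_algebraMap' (ZMod p) p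
  have hfrob : ∀ (a b : Rpn p n), (a + b) ^ p ^ t = a ^ p ^ t + b ^ p ^ t :=
    fun a b => add_pow_char_pow a b p t
  have key : ∀ y : Rpn p n, aeval (y ^ (p ^ t)) f = (aeval y f) ^ (p ^ t) := by
    intro y
    induction f using Polynomial.induction_on' with
    | add f g hf hg => rw [map_add, map_add, hf, hg, hfrob]
    | monomial k a =>
        rw [aeval_monomial, aeval_monomial, mul_pow, ← pow_mul, ← pow_mul, mul_comm k,
          ← map_pow, ZMod.pow_card_pow]
  have hneg : (-x) ^ (p ^ t) = -x ^ (p ^ t) := hptodd.neg_pow x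
  rw [← hneg, key]
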